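/- ℝ^N decomposes as the direct sum ℝ^N = ker A ⊕ im A, the sum being orthogonal for the v-weighted inner product; moreover im A = im A². -/

import Mathlib

open Matrix Finset

theorem direct_sum_ker_range (N : ℕ) (σ A : Matrix (Fin N) (Fin N) ℝ)
    (hσ : ∀ i j, i ≠ j → 0 ≤ σ i j)
    (hoff : ∀ i j, i ≠ j → A i j = σ i j)
    (hdiag : ∀ i, A i i = -∑ k ∈ Finset.univ.filter (fun k => k ≠ i), σ i k)
    (hconn : ∀ i j : Fin N, i ≠ j → Relation.TransGen (fun a b => 0 < σ a b) i j)
    (v : Fin N → ℝ) (hvpos : ∀ i, 0 < v i) (hvsum : ∑ i, v i = 1)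
    (hv : Aᵀ.mulVec v = 0) :
    IsCompl (LinearMap.ker (Matrix.mulVecLin A)) (LinearMap.range (Matrix.mulVecLin A)) ∧
    (∀ k r : Fin N → ℝ, A.mulVec k = 0 → (∃ u, A.mulVec u = r) →
      ∑ i, v i * k i * r i = 0) ∧
    LinearMap.range (Matrix.mulVecLin A) = LinearMap.range (Matrix.mulVecLin (A * A)) := by
  set f := A.mulVecLin with hfdef
  -- rewrite a row of A.mulVec in terms of σ and differences
  have hrow : ∀ (k : Fin N → ℝ) (a : Fin N),
      A.mulVec k a = ∑ j ∈ Finset.univ.erase a, σ a j * (k j - k a) := by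
    intro k a
    have h1 : A.mulVec k a = ∑ j, A a j * k j := by
      simp [Matrix.mulVec, dotProduct]
    have h2 : ∑ j, A a j * k j
        = A a a * k a + ∑ j ∈ Finset.univ.erase a, A a j * k j :=
      (Finset.add_sum_erase Finset.univ (fun j => A a j * k j) (Finset.mem_univ a)).symm
    have h3 : ∑ j ∈ Finset.univ.erase a, A a j * k j
        = ∑ j ∈ Finset.univ.erase a, σ a j * k j := by
      apply Finset.sum_congr rfl
      intro j hj
      rw [hoff a j (Finset.ne_of_mem_erase hj).symm]
    have h4 : A a a = -∑ j ∈ Finset.univ.erase a, σ a j := by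
      rw [hdiag a, ← Finset.filter_ne']
    rw [h1, h2, h3, h4]
    rw [show (∑ j ∈ Finset.univ.erase a, σ a j * (k j - k a))
        = ∑ j ∈ Finset.univ.erase a, (σ a j * k j - σ a j * k a) by
      apply Finset.sum_congr rfl; intro j _; ring]
    rw [Finset.sum_sub_distrib, ← Finset.sum_mul]
    ring
  -- kernel vectors are constant
  have hconst : ∀ k : Fin N → ℝ, A.mulVec k = 0 → ∀ i j : Fin N, k i = k j := by
    intro k hk i j
    obtain ⟨a, -, ha⟩ := Finset.exists_max_image Finset.univ k ⟨i, Finset.mem_univ i⟩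
    have step : ∀ b c : Fin N, k b = k a → 0 < σ b c → k c = k a := by
      intro b c hb hbc
      by_cases hcb : c = b
      · rw [hcb]; exact hb
      have h0 : ∑ j ∈ Finset.univ.erase b, σ b j * (k j - k b) = 0 := by
        rw [← hrow k b, hk]; rfl
      have hnp : ∀ j ∈ Finset.univ.erase b, σ b j * (k j - k b) ≤ 0 := by
        intro j hj
        have h1 : 0 ≤ σ b j := hσ b j (Finset.ne_of_mem_erase hj).symm
        have h2 : k j - k b ≤ 0 := by
          have := ha j (Finset.mem_univ j); rw [hb]; linarith
        exact mul_nonpos_of_nonneg_of_nonpos h1 h2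
      have hterm : σ b c * (k c - k b) = 0 :=
        (Finset.sum_eq_zero_iff_of_nonpos hnp).mp h0 c
          (Finset.mem_erase.mpr ⟨hcb, Finset.mem_univ c⟩)
      have : k c - k b = 0 := by
        rcases mul_eq_zero.mp hterm with h | h
        · exact absurd h (ne_of_gt hbc)
        · exact h
      linarith [hb, this]
    have hall' : ∀ j : Fin N, Relation.TransGen (fun a b => 0 < σ a b) a j → k j = k a := by
      intro j h
      induction h with
      | single h => exact step a _ rfl h
      | tail _ h ih => exact step _ _ ih h
    have hall : ∀ j : Fin N, k j = k a := by
      intro j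
      by_cases hja : j = a
      · rw [hja]
      · exact hall' j (hconn a j (fun h => hja h.symm))
    rw [hall i, hall j]
  -- orthogonality
  have horth : ∀ k r : Fin N → ℝ, A.mulVec k = 0 → (∃ u, A.mulVec u = r) →
      ∑ i, v i * k i * r i = 0 := by
    intro k r hk ⟨u, hu⟩
    subst hu
    have hvA : ∀ j, ∑ i, v i * A i j = 0 := by
      intro j
      have h := congrFun hv j
      simpa [Matrix.mulVec, dotProduct, Matrix.transpose_apply, mul_comm] using h
    rcases Nat.eq_zero_or_pos N with hN | hN
    · subst hN; simp
    have a : Fin N := ⟨0, hN⟩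
    calc ∑ i, v i * k i * A.mulVec u i
        = ∑ i, k a * ∑ j, v i * A i j * u j := by
          apply Finset.sum_congr rfl
          intro i _
          rw [hconst k hk i a]
          simp [Matrix.mulVec, dotProduct, Finset.mul_sum]
          ring_nf
      _ = k a * ∑ j, (∑ i, v i * A i j) * u j := by
          rw [← Finset.mul_sum, Finset.sum_comm]
          congr 1
          apply Finset.sum_congr rfl
          intro j _
          rw [Finset.sum_mul]
      _ = 0 := by
          simp [hvA]
  -- disjointness
  have hdisj : Disjoint (LinearMap.ker f) (LinearMap.range f) := by
    rw [Submodule.disjoint_def]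
    intro x hx hx'
    obtain ⟨u, hu⟩ := hx'
    have hx0 : A.mulVec x = 0 := hx
    have h0 : ∑ i, v i * x i * x i = 0 := horth x x hx0 ⟨u, hu⟩
    have hnn : ∀ i ∈ Finset.univ, 0 ≤ v i * x i * x i := by
      intro i _
      have := (hvpos i).le
      nlinarith [sq_nonneg (x i)]
    funext i
    have hi : v i * x i * x i = 0 :=
      (Finset.sum_eq_zero_iff_of_nonneg hnn).mp h0 i (Finset.mem_univ i)
    rw [mul_assoc] at hi
    rcases mul_eq_zero.mp hi with h | h
    · exact absurd h (ne_of_gt (hvpos i))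
    · simpa using mul_self_eq_zero.mp h
  -- codisjointness via rank-nullity
  have hcod : Codisjoint (LinearMap.ker f) (LinearMap.range f) := by
    rw [codisjoint_iff]
    apply Submodule.eq_top_of_finrank_eq
    have h1 := Submodule.finrank_sup_add_finrank_inf_eq (LinearMap.ker f) (LinearMap.range f)
    rw [disjoint_iff.mp hdisj] at h1
    simp only [finrank_bot, add_zero] at h1
    rw [h1, add_comm]
    exact LinearMap.finrank_range_add_finrank_ker f
  refine ⟨⟨hdisj, hcod⟩, horth, ?_⟩
  -- range A = range A²
  rw [Matrix.mulVecLin_mul]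
  apply le_antisymm
  · rintro y ⟨x, rfl⟩
    have hx : x ∈ LinearMap.ker f ⊔ LinearMap.range f := by
      rw [codisjoint_iff.mp hcod]; trivial
    obtain ⟨kk, hkk, r, hr, rfl⟩ := Submodule.mem_sup.mp hx
    obtain ⟨u, rfl⟩ := hr
    refine ⟨u, ?_⟩
    have hkk0 : f kk = 0 := hkk
    simp only [LinearMap.comp_apply, map_add, hkk0, zero_add]
    rfl
  · exact LinearMap.range_comp_le_range f f
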